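/- Let t be a nonnegative integer and n ≥ 6t+2 a positive integer. Then 2n−1 does not belong to S_{n,t}. -/

import Mathlib

/-- The generating set `G_{n,t}`. -/
def Gset (n t : ℕ) : Set ℕ :=
  {m | (∃ i < t, m = n - 2*t + 4*i ∨ m = n - 2*t + 4*i + 1) ∨
       (n + 2*t ≤ m ∧ m ≤ 2*n - 4*t - 2) ∨
       (∃ j < t, m = 2*n - 4*t + 4*j - 1)}

/-- The numerical semigroup `S_{n,t}`, the additive submonoid of ℕ generated by `G_{n,t}`. -/
def Sgen (n t : ℕ) : AddSubmonoid ℕ := AddSubmonoid.closure (Gset n t)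

lemma gset_lb (t n : ℕ) (hn : 6*t + 2 ≤ n) {g : ℕ} (hg : g ∈ Gset n t) :
    n - 2*t ≤ g := by
  simp only [Gset, Set.mem_setOf_eq] at hg
  rcases hg with ⟨i, hi, hg | hg⟩ | ⟨h1, h2⟩ | ⟨j, hj, hg⟩ <;> omega

lemma gset_cases (t n : ℕ) (hn : 6*t + 2 ≤ n) {g : ℕ} (hg : g ∈ Gset n t) :
    (∃ i < t, ∃ e ≤ 1, g = n - 2*t + 4*i + e) ∨ n + 2*t ≤ g := by
  simp only [Gset, Set.mem_setOf_eq] at hg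
  rcases hg with ⟨i, hi, hg | hg⟩ | ⟨h1, h2⟩ | ⟨j, hj, hg⟩
  · exact Or.inl ⟨i, hi, 0, by omega, by omega⟩
  · exact Or.inl ⟨i, hi, 1, by omega, by omega⟩
  · exact Or.inr h1
  · right; omega

theorem stmt_1 (t n : ℕ) (hn : 6*t + 2 ≤ n) :
    2*n - 1 ∉ Sgen n t := by
  intro h
  have key : ∀ m ∈ Sgen n t, m = 0 ∨ m ∈ Gset n t ∨ (2*n - 4*t ≤ m ∧ m ≠ 2*n - 1) := by
    intro m hm
    induction hm using AddSubmonoid.closure_induction with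
    | mem x hx => exact Or.inr (Or.inl hx)
    | zero => exact Or.inl rfl
    | add a b ha hb iha ihb =>
      rcases iha with rfl | iha | ⟨ha1, ha2⟩
      · simpa using ihb
      · rcases ihb with rfl | ihb | ⟨hb1, hb2⟩
        · simpa using Or.inr (Or.inl iha)
        · -- both generators
          right; right
          have la := gset_lb t n hn iha
          have lb := gset_lb t n hn ihb
          constructor
          · omega
          · intro hsum
            rcases gset_cases t n hn iha with ⟨i, hi, e, he, rfl⟩ | hca
            · rcases gset_cases t n hn ihb with ⟨j, hj, f, hf, rfl⟩ | hcb
              · omega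
              · omega
            · omega
        · right; right
          have la := gset_lb t n hn iha
          omega
      · rcases ihb with rfl | ihb | ⟨hb1, hb2⟩
        · right; right; omega
        · right; right
          have lb := gset_lb t n hn ihb
          omega
        · right; right; omega
  rcases key _ h with h0 | hg | ⟨_, hne⟩
  · omega
  · simp only [Gset, Set.mem_setOf_eq] at hg
    rcases hg with ⟨i, hi, hg | hg⟩ | ⟨h1, h2⟩ | ⟨j, hj, hg⟩ <;> omega
  · exact hne rfl
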